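/- Let H(x) = -∑_{j=1}^N ∂²/∂x_j² + γ ∑_{j<k} V(x_j - x_k) with V(r) = 1/(4 sin²(r/2)) and γ = 2λ(λ-1), λ > 0. Then Ψ₀(x) = ∏_{1≤j<k≤N} sin((x_j - x_k)/2)^λ satisfies H Ψ₀ = E₀ Ψ₀ with E₀ = λ²N(N²-1)/12, on the open region where all x_j are distinct mod 2π and ordered so all sin((x_j-x_k)/2) > 0. -/

import Mathlib

open Real Filter Topology

lemma hd_log_pos (c t : ℝ) (h : Real.sin ((t - c) / 2) ≠ 0) :
    HasDerivAt (fun s => Real.log (Real.sin ((s - c) / 2)))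
      (Real.cos ((t - c) / 2) / Real.sin ((t - c) / 2) / 2) t := by
  have h1 : HasDerivAt (fun s : ℝ => (s - c) / 2) (1 / 2) t := by
    simpa using ((hasDerivAt_id t).sub_const c).div_const 2
  have h2 := (Real.hasDerivAt_sin ((t - c) / 2)).comp t h1
  have h3 := (Real.hasDerivAt_log h).comp t h2
  refine h3.congr_deriv ?_
  field_simp

lemma hd_log_neg (c t : ℝ) (h : Real.sin ((c - t) / 2) ≠ 0) :
    HasDerivAt (fun s => Real.log (Real.sin ((c - s) / 2)))
      (Real.cos ((t - c) / 2) / Real.sin ((t - c) / 2) / 2) t := by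
  have h1 : HasDerivAt (fun s : ℝ => (c - s) / 2) (-1 / 2) t := by
    simpa using ((hasDerivAt_id t).const_sub c).div_const 2
  have h2 := (Real.hasDerivAt_sin ((c - t) / 2)).comp t h1
  have h3 := (Real.hasDerivAt_log h).comp t h2
  refine h3.congr_deriv ?_
  have e : (t - c) / 2 = -((c - t) / 2) := by ring
  rw [e, Real.sin_neg, Real.cos_neg]
  field_simp

lemma hd_cot (c t : ℝ) (h : Real.sin ((t - c) / 2) ≠ 0) :
    HasDerivAt (fun s => Real.cos ((s - c) / 2) / Real.sin ((s - c) / 2) / 2)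
      (-(1 / 4) / Real.sin ((t - c) / 2) ^ 2) t := by
  have h1 : HasDerivAt (fun s : ℝ => (s - c) / 2) (1 / 2) t := by
    simpa using ((hasDerivAt_id t).sub_const c).div_const 2
  have hsin := (Real.hasDerivAt_sin ((t - c) / 2)).comp t h1
  have hcos := (Real.hasDerivAt_cos ((t - c) / 2)).comp t h1
  have h4 := (hcos.div hsin h).div_const 2
  refine h4.congr_deriv ?_
  have := Real.sin_sq_add_cos_sq ((t - c) / 2)
  simp only [Function.comp_apply]
  field_simp
  nlinarith [this]

lemma step1_aux (N : ℕ) (lam : ℝ) (x : Fin N → ℝ) (j : Fin N) (t : ℝ) :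
    (∏ a : Fin N, ∏ b : Fin N,
        if a < b then Real.sin ((Function.update x j t a - Function.update x j t b) / 2) ^ lam else 1)
      = (∏ a : Fin N, ∏ b : Fin N, if a < b ∧ a ≠ j ∧ b ≠ j then Real.sin ((x a - x b) / 2) ^ lam else 1)
        * ∏ k : Fin N, (if j < k then Real.sin ((t - x k) / 2) ^ lam else 1)
            * (if k < j then Real.sin ((x k - t) / 2) ^ lam else 1) := by
  have hfac : ∀ a b : Fin N,
      (if a < b then Real.sin ((Function.update x j t a - Function.update x j t b) / 2) ^ lam else 1)
        = (if a < b ∧ a ≠ j ∧ b ≠ j then Real.sin ((x a - x b) / 2) ^ lam else 1)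
          * (if a = j then (if j < b then Real.sin ((t - x b) / 2) ^ lam else 1)
             else (if b = j ∧ a < j then Real.sin ((x a - t) / 2) ^ lam else 1)) := by
    intro a b
    rcases eq_or_ne a j with rfl | haj
    · rcases eq_or_ne b a with rfl | hbj
      · simp
      · simp [Function.update_of_ne hbj, lt_irrefl]
    · rcases eq_or_ne b j with rfl | hbj
      · by_cases h : a < b <;> simp [h, Function.update_of_ne haj, haj]
      · by_cases h : a < b <;>
          simp [h, Function.update_of_ne haj, Function.update_of_ne hbj, haj, hbj]
  calc (∏ a : Fin N, ∏ b : Fin N,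
        if a < b then Real.sin ((Function.update x j t a - Function.update x j t b) / 2) ^ lam else 1)
      = ∏ a : Fin N,
          ((∏ b : Fin N, if a < b ∧ a ≠ j ∧ b ≠ j then Real.sin ((x a - x b) / 2) ^ lam else 1)
          * ∏ b : Fin N, (if a = j then (if j < b then Real.sin ((t - x b) / 2) ^ lam else 1)
             else (if b = j ∧ a < j then Real.sin ((x a - t) / 2) ^ lam else 1))) := by
        refine Finset.prod_congr rfl fun a _ => ?_
        rw [← Finset.prod_mul_distrib]
        exact Finset.prod_congr rfl fun b _ => hfac a b
    _ = (∏ a : Fin N, ∏ b : Fin N, if a < b ∧ a ≠ j ∧ b ≠ j then Real.sin ((x a - x b) / 2) ^ lam else 1)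
        * ∏ a : Fin N, ∏ b : Fin N,
            (if a = j then (if j < b then Real.sin ((t - x b) / 2) ^ lam else 1)
             else (if b = j ∧ a < j then Real.sin ((x a - t) / 2) ^ lam else 1)) :=
        Finset.prod_mul_distrib
    _ = _ := by
        congr 1
        rw [← Finset.mul_prod_erase Finset.univ _ (Finset.mem_univ j)]
        have h2 : ∀ a ∈ Finset.univ.erase j,
            (∏ b : Fin N, if a = j then (if j < b then Real.sin ((t - x b) / 2) ^ lam else 1)
              else (if b = j ∧ a < j then Real.sin ((x a - t) / 2) ^ lam else 1))
            = (if a < j then Real.sin ((x a - t) / 2) ^ lam else 1) := by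
          intro a ha
          have haj : a ≠ j := Finset.ne_of_mem_erase ha
          by_cases h : a < j
          · simp only [if_neg haj, h, and_true]
            simp
          · simp [haj, h]
        rw [Finset.prod_congr rfl h2]
        have h3 : (∏ a ∈ Finset.univ.erase j, if a < j then Real.sin ((x a - t) / 2) ^ lam else 1)
            = ∏ a : Fin N, if a < j then Real.sin ((x a - t) / 2) ^ lam else 1 :=
          Finset.prod_erase _ (by simp)
        rw [h3, Finset.prod_mul_distrib]
        simp

lemma deriv2_key (N : ℕ) (lam : ℝ) (x : Fin N → ℝ)
    (hx : ∀ a b : Fin N, a < b → 0 < Real.sin ((x a - x b) / 2)) (j : Fin N) :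
    deriv (deriv (fun s => ∏ a : Fin N, ∏ b : Fin N,
        if a < b then Real.sin ((Function.update x j s a - Function.update x j s b) / 2) ^ lam else 1)) (x j)
      = (∏ a : Fin N, ∏ b : Fin N, if a < b then Real.sin ((x a - x b) / 2) ^ lam else 1)
        * ((lam * ∑ k : Fin N, (if k = j then 0 else
              Real.cos ((x j - x k) / 2) / Real.sin ((x j - x k) / 2) / 2)) ^ 2
           + lam * ∑ k : Fin N, (if k = j then 0 else
              -(1 / 4) / Real.sin ((x j - x k) / 2) ^ 2)) := by
  classical
  set Cj : ℝ := ∏ a : Fin N, ∏ b : Fin N,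
      if a < b ∧ a ≠ j ∧ b ≠ j then Real.sin ((x a - x b) / 2) ^ lam else 1 with hCj
  set L : ℝ → ℝ := fun t => ∑ k : Fin N,
      (if j < k then Real.log (Real.sin ((t - x k) / 2))
       else if k < j then Real.log (Real.sin ((x k - t) / 2)) else 0) with hLdef
  set D : ℝ → ℝ := fun t => ∑ k : Fin N,
      (if k = j then 0 else Real.cos ((t - x k) / 2) / Real.sin ((t - x k) / 2) / 2) with hDdef
  have ev : ∀ᶠ t in 𝓝 (x j), ∀ k : Fin N,
      (j < k → 0 < Real.sin ((t - x k) / 2)) ∧ (k < j → 0 < Real.sin ((x k - t) / 2)) := by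
    rw [eventually_all]
    intro k
    have c1 : ContinuousAt (fun t => Real.sin ((t - x k) / 2)) (x j) := by fun_prop
    have c2 : ContinuousAt (fun t => Real.sin ((x k - t) / 2)) (x j) := by fun_prop
    rcases lt_trichotomy j k with h | h | h
    · filter_upwards [c1.eventually (eventually_gt_nhds (hx j k h))] with t ht
      exact ⟨fun _ => ht, fun h' => absurd h (asymm h')⟩
    · filter_upwards with t
      exact ⟨fun h' => absurd h' (h ▸ lt_irrefl j), fun h' => absurd h' (h ▸ lt_irrefl j)⟩
    · filter_upwards [c2.eventually (eventually_gt_nhds (hx k j h))] with t ht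
      exact ⟨fun h' => absurd h (asymm h'), fun _ => ht⟩
  have hx0 : ∀ k : Fin N,
      (j < k → 0 < Real.sin ((x j - x k) / 2)) ∧ (k < j → 0 < Real.sin ((x k - x j) / 2)) :=
    fun k => ⟨hx j k, fun h => hx k j h⟩
  have hP : ∀ t : ℝ, (∀ k : Fin N,
      (j < k → 0 < Real.sin ((t - x k) / 2)) ∧ (k < j → 0 < Real.sin ((x k - t) / 2))) →
      (∏ k : Fin N, (if j < k then Real.sin ((t - x k) / 2) ^ lam else 1)
        * (if k < j then Real.sin ((x k - t) / 2) ^ lam else 1))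
      = Real.exp (lam * L t) := by
    intro t ht
    have key : ∀ k : Fin N, (if j < k then Real.sin ((t - x k) / 2) ^ lam else 1)
        * (if k < j then Real.sin ((x k - t) / 2) ^ lam else 1)
        = Real.exp (lam * (if j < k then Real.log (Real.sin ((t - x k) / 2))
            else if k < j then Real.log (Real.sin ((x k - t) / 2)) else 0)) := by
      intro k
      rcases lt_trichotomy j k with h | h | h
      · rw [if_pos h, if_pos h, if_neg (asymm h), mul_one,
          Real.rpow_def_of_pos ((ht k).1 h), mul_comm lam]
      · simp [h, lt_irrefl]
      · rw [if_neg (asymm h), if_neg (asymm h), if_pos h, if_pos h, one_mul,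
          Real.rpow_def_of_pos ((ht k).2 h), mul_comm lam]
    rw [Finset.prod_congr rfl fun k _ => key k, ← Real.exp_sum, ← Finset.mul_sum]
  have hLD : ∀ t : ℝ, (∀ k : Fin N,
      (j < k → 0 < Real.sin ((t - x k) / 2)) ∧ (k < j → 0 < Real.sin ((x k - t) / 2))) →
      HasDerivAt L (D t) t := by
    intro t ht
    apply HasDerivAt.fun_sum
    intro k _
    rcases lt_trichotomy j k with h | h | h
    · have hne : Real.sin ((t - x k) / 2) ≠ 0 := ne_of_gt ((ht k).1 h)
      simpa [if_pos h, if_neg (ne_of_gt h)] using hd_log_pos (x k) t hne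
    · subst h
      simpa [lt_irrefl] using hasDerivAt_const t (0 : ℝ)
    · have hne : Real.sin ((x k - t) / 2) ≠ 0 := ne_of_gt ((ht k).2 h)
      simpa [if_neg (asymm h), if_pos h, if_neg (ne_of_lt h)] using hd_log_neg (x k) t hne
  have hE : ∀ t : ℝ, (∀ k : Fin N,
      (j < k → 0 < Real.sin ((t - x k) / 2)) ∧ (k < j → 0 < Real.sin ((x k - t) / 2))) →
      HasDerivAt (fun t => Real.exp (lam * L t)) (Real.exp (lam * L t) * (lam * D t)) t := by
    intro t ht
    exact (Real.hasDerivAt_exp (lam * L t)).comp t ((hLD t ht).const_mul lam)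
  -- sin((x j - x k)/2) ≠ 0 for k ≠ j
  have hsne : ∀ k : Fin N, k ≠ j → Real.sin ((x j - x k) / 2) ≠ 0 := by
    intro k hk
    rcases lt_trichotomy j k with h | h | h
    · exact ne_of_gt (hx j k h)
    · exact absurd h.symm hk
    · have := hx k j h
      have e : (x j - x k) / 2 = -((x k - x j) / 2) := by ring
      rw [e, Real.sin_neg]
      exact neg_ne_zero.mpr (ne_of_gt this)
  have hDD : HasDerivAt D (∑ k : Fin N, (if k = j then 0 else
      -(1 / 4) / Real.sin ((x j - x k) / 2) ^ 2)) (x j) := by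
    apply HasDerivAt.fun_sum
    intro k _
    rcases eq_or_ne k j with he | hk
    · simpa [he] using hasDerivAt_const (x j) (0 : ℝ)
    · simpa [if_neg hk] using hd_cot (x k) (x j) (hsne k hk)
  -- eventual equality of the target function with Cj * exp(lam * L t)
  have hev1 : (fun s => ∏ a : Fin N, ∏ b : Fin N,
      if a < b then Real.sin ((Function.update x j s a - Function.update x j s b) / 2) ^ lam else 1)
      =ᶠ[𝓝 (x j)] fun t => Cj * Real.exp (lam * L t) := by
    filter_upwards [ev] with t ht
    rw [step1_aux N lam x j t, hP t ht]
  have hd1 := hev1.deriv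
  have hd2 : deriv (fun t => Cj * Real.exp (lam * L t))
      =ᶠ[𝓝 (x j)] fun t => Cj * (Real.exp (lam * L t) * (lam * D t)) := by
    filter_upwards [ev] with t ht
    exact ((hE t ht).const_mul Cj).deriv
  have hfin : deriv (deriv (fun s => ∏ a : Fin N, ∏ b : Fin N,
      if a < b then Real.sin ((Function.update x j s a - Function.update x j s b) / 2) ^ lam else 1)) (x j)
      = deriv (fun t => Cj * (Real.exp (lam * L t) * (lam * D t))) (x j) :=
    (hd1.trans hd2).deriv_eq
  have hG : HasDerivAt (fun t => Cj * (Real.exp (lam * L t) * (lam * D t)))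
      (Cj * ((Real.exp (lam * L (x j)) * (lam * D (x j))) * (lam * D (x j))
        + Real.exp (lam * L (x j)) * (lam * ∑ k : Fin N, (if k = j then 0 else
            -(1 / 4) / Real.sin ((x j - x k) / 2) ^ 2)))) (x j) :=
    ((hE (x j) hx0).mul (hDD.const_mul lam)).const_mul Cj
  rw [hfin, hG.deriv]
  -- Ψ x = Cj * exp (lam * L (x j))
  have hPsix : (∏ a : Fin N, ∏ b : Fin N, if a < b then Real.sin ((x a - x b) / 2) ^ lam else 1)
      = Cj * Real.exp (lam * L (x j)) := by
    have := step1_aux N lam x j (x j)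
    rw [Function.update_eq_self] at this
    rw [this, hP (x j) hx0]
  rw [hPsix]
  have : D (x j) = ∑ k : Fin N, (if k = j then 0 else
      Real.cos ((x j - x k) / 2) / Real.sin ((x j - x k) / 2) / 2) := rfl
  rw [this]
  ring

lemma cot_id (a b : ℝ) (ha : Real.sin a ≠ 0) (hb : Real.sin b ≠ 0) (hab : Real.sin (a+b) ≠ 0) :
    Real.cos a / Real.sin a * (Real.cos (a+b) / Real.sin (a+b))
      - Real.cos a / Real.sin a * (Real.cos b / Real.sin b)
      + Real.cos (a+b) / Real.sin (a+b) * (Real.cos b / Real.sin b) = -1 := by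
  rw [Real.sin_add, Real.cos_add] at *
  field_simp
  nlinarith [Real.sin_sq_add_cos_sq a, Real.sin_sq_add_cos_sq b]

lemma cyc3 {N : ℕ} (h : Fin N → Fin N → Fin N → ℝ) :
    (∑ j : Fin N, ∑ k : Fin N, ∑ l : Fin N, h j k l)
      = ∑ j : Fin N, ∑ k : Fin N, ∑ l : Fin N, h l j k := by
  rw [Finset.sum_comm]
  exact Finset.sum_congr rfl fun k _ => Finset.sum_comm

lemma sum_sq_cot (N : ℕ) (x : Fin N → ℝ)
    (hx : ∀ a b : Fin N, a < b → 0 < Real.sin ((x a - x b) / 2)) :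
    ∑ j : Fin N, (∑ k : Fin N, (if k = j then 0 else
        Real.cos ((x j - x k) / 2) / Real.sin ((x j - x k) / 2))) ^ 2
      = (∑ j : Fin N, ∑ k : Fin N, (if k = j then 0 else 1 / Real.sin ((x j - x k) / 2) ^ 2))
        - (N : ℝ) * ((N : ℝ) - 1) - (N : ℝ) * ((N : ℝ) - 1) * ((N : ℝ) - 2) / 3 := by
  classical
  set c : Fin N → Fin N → ℝ := fun a b => Real.cos ((x a - x b) / 2) / Real.sin ((x a - x b) / 2)
    with hc
  have hsne : ∀ a b : Fin N, a ≠ b → Real.sin ((x a - x b) / 2) ≠ 0 := by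
    intro a b hab
    rcases lt_trichotomy a b with h | h | h
    · exact ne_of_gt (hx a b h)
    · exact absurd h hab
    · have e : (x a - x b) / 2 = -((x b - x a) / 2) := by ring
      rw [e, Real.sin_neg]
      exact neg_ne_zero.mpr (ne_of_gt (hx b a h))
  have hneg : ∀ a b : Fin N, c b a = -c a b := by
    intro a b
    have e : (x b - x a) / 2 = -((x a - x b) / 2) := by ring
    simp only [hc, e, Real.sin_neg, Real.cos_neg, div_neg]
  have htrip : ∀ j k l : Fin N, j ≠ k → j ≠ l → k ≠ l →
      c j k * c j l + c k l * c k j + c l j * c l k = -1 := by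
    intro j k l hjk hjl hkl
    have e : (x j - x k) / 2 + (x k - x l) / 2 = (x j - x l) / 2 := by ring
    have key := cot_id ((x j - x k) / 2) ((x k - x l) / 2)
      (hsne j k hjk) (hsne k l hkl) (by rw [e]; exact hsne j l hjl)
    rw [e] at key
    have key' : c j k * c j l - c j k * c k l + c j l * c k l = -1 := key
    rw [hneg j k, hneg j l, hneg k l]
    linear_combination key'
  have hcount1 : ∀ j : Fin N, ∑ k : Fin N, (if k = j then (0:ℝ) else 1) = (N : ℝ) - 1 := by
    intro j
    have hpt : ∀ k : Fin N, (if k = j then (0:ℝ) else 1) = 1 - (if k = j then 1 else 0) := by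
      intro k; by_cases h : k = j <;> simp [h]
    rw [Finset.sum_congr rfl fun k _ => hpt k, Finset.sum_sub_distrib]
    simp [Finset.card_univ]
  have hcount3 : (∑ j : Fin N, ∑ k : Fin N, ∑ l : Fin N,
      (if j ≠ k ∧ j ≠ l ∧ k ≠ l then (1:ℝ) else 0))
      = (N : ℝ) * ((N : ℝ) - 1) * ((N : ℝ) - 2) := by
    have hin : ∀ j k : Fin N, (∑ l : Fin N, (if j ≠ k ∧ j ≠ l ∧ k ≠ l then (1:ℝ) else 0))
        = if k = j then 0 else (N : ℝ) - 2 := by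
      intro j k
      by_cases hjk : k = j
      · simp [hjk]
      · rw [if_neg hjk]
        have hpt : ∀ l : Fin N, (if j ≠ k ∧ j ≠ l ∧ k ≠ l then (1:ℝ) else 0)
            = 1 - (if l = j then 1 else 0) - (if l = k then 1 else 0) := by
          intro l
          by_cases hlj : l = j
          · by_cases hlk : l = k
            · exact absurd (hlk.symm.trans hlj) hjk
            · subst hlj; simp [hlk]
          · by_cases hlk : l = k
            · subst hlk; simp [hlj]
            · simp [hlj, hlk, Ne.symm hjk]
              exact ⟨fun h => hlj h.symm, fun h => hlk h.symm⟩
        rw [Finset.sum_congr rfl fun l _ => hpt l, Finset.sum_sub_distrib, Finset.sum_sub_distrib]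
        simp [Finset.card_univ]
        ring
    rw [Finset.sum_congr rfl fun j _ => Finset.sum_congr rfl fun k _ => hin j k]
    have hin2 : ∀ j : Fin N, (∑ k : Fin N, if k = j then (0:ℝ) else (N : ℝ) - 2)
        = ((N : ℝ) - 1) * ((N : ℝ) - 2) := by
      intro j
      have hpt : ∀ k : Fin N, (if k = j then (0:ℝ) else (N : ℝ) - 2)
          = (if k = j then (0:ℝ) else 1) * ((N : ℝ) - 2) := by
        intro k; by_cases h : k = j <;> simp [h]
      rw [Finset.sum_congr rfl fun k _ => hpt k, ← Finset.sum_mul, hcount1]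
    rw [Finset.sum_congr rfl fun j _ => hin2 j, Finset.sum_const, Finset.card_univ]
    simp
    ring
  set g : Fin N → Fin N → Fin N → ℝ := fun j k l =>
    if j ≠ k ∧ j ≠ l ∧ k ≠ l then c j k * c j l else 0 with hg
  set T : ℝ := ∑ j : Fin N, ∑ k : Fin N, ∑ l : Fin N, g j k l with hT
  have h1 : T = ∑ j : Fin N, ∑ k : Fin N, ∑ l : Fin N, g l j k := cyc3 g
  have h2 : T = ∑ j : Fin N, ∑ k : Fin N, ∑ l : Fin N, g k l j := by
    rw [h1]; exact cyc3 (fun a b c => g c a b)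
  have h3 : (∑ j : Fin N, ∑ k : Fin N, ∑ l : Fin N, (g j k l + g l j k + g k l j))
      = T + T + T := by
    simp only [Finset.sum_add_distrib]
    rw [← hT, ← h1, ← h2]
  have h4 : ∀ j k l : Fin N, g j k l + g l j k + g k l j
      = if j ≠ k ∧ j ≠ l ∧ k ≠ l then (-1 : ℝ) else 0 := by
    intro j k l
    by_cases hd : j ≠ k ∧ j ≠ l ∧ k ≠ l
    · obtain ⟨hjk, hjl, hkl⟩ := hd
      rw [if_pos (⟨hjk, hjl, hkl⟩ : j ≠ k ∧ j ≠ l ∧ k ≠ l), hg]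
      simp only
      rw [if_pos (⟨hjk, hjl, hkl⟩ : j ≠ k ∧ j ≠ l ∧ k ≠ l),
        if_pos (⟨Ne.symm hjl, Ne.symm hkl, hjk⟩ : l ≠ j ∧ l ≠ k ∧ j ≠ k),
        if_pos (⟨hkl, Ne.symm hjk, Ne.symm hjl⟩ : k ≠ l ∧ k ≠ j ∧ l ≠ j)]
      linear_combination htrip j k l hjk hjl hkl
    · rw [if_neg hd, hg]
      simp only
      rw [if_neg hd,
        if_neg (fun h : l ≠ j ∧ l ≠ k ∧ j ≠ k => hd ⟨h.2.2, Ne.symm h.1, Ne.symm h.2.1⟩),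
        if_neg (fun h : k ≠ l ∧ k ≠ j ∧ l ≠ j => hd ⟨Ne.symm h.2.1, Ne.symm h.2.2, h.1⟩)]
      norm_num
  have hTval : T = -((N : ℝ) * ((N : ℝ) - 1) * ((N : ℝ) - 2)) / 3 := by
    have h5 : T + T + T = -((N : ℝ) * ((N : ℝ) - 1) * ((N : ℝ) - 2)) := by
      rw [← h3, Finset.sum_congr rfl fun j _ => Finset.sum_congr rfl fun k _ =>
        Finset.sum_congr rfl fun l _ => h4 j k l]
      have hpt : ∀ j k l : Fin N, (if j ≠ k ∧ j ≠ l ∧ k ≠ l then (-1:ℝ) else 0)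
          = -(if j ≠ k ∧ j ≠ l ∧ k ≠ l then (1:ℝ) else 0) := by
        intro j k l; by_cases h : j ≠ k ∧ j ≠ l ∧ k ≠ l <;> simp [h]
      rw [Finset.sum_congr rfl fun j _ => Finset.sum_congr rfl fun k _ =>
        Finset.sum_congr rfl fun l _ => hpt j k l]
      simp only [Finset.sum_neg_distrib]
      rw [hcount3]
    linarith
  -- expand the squares
  have hsq : ∀ j : Fin N, (∑ k : Fin N, (if k = j then 0 else c j k)) ^ 2
      = ∑ k : Fin N, ∑ l : Fin N, (if k = j then 0 else c j k) * (if l = j then 0 else c j l) := by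
    intro j
    rw [sq, Finset.sum_mul_sum]
  have hsplit : ∀ j k l : Fin N,
      (if k = j then (0:ℝ) else c j k) * (if l = j then 0 else c j l)
        = (if k = l then (if k = j then 0 else c j k ^ 2) else 0) + g j k l := by
    intro j k l
    rw [hg]; simp only
    by_cases hkj : k = j
    · subst hkj
      by_cases hkl : k = l <;> simp [hkl]
    · by_cases hlj : l = j
      · subst hlj
        have h' : ¬ k = l := hkj
        simp [hkj, h']
    
      · by_cases hkl : k = l
        · subst hkl
          simp [hkj, sq, Ne.symm hkj]
        · simp [hkj, hlj, hkl, Ne.symm hkj, Ne.symm hlj]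
  have hdiag : ∀ j k : Fin N, (if k = j then (0:ℝ) else c j k ^ 2)
      = (if k = j then 0 else 1 / Real.sin ((x j - x k) / 2) ^ 2) - (if k = j then 0 else 1) := by
    intro j k
    by_cases h : k = j
    · simp [h]
    · rw [if_neg h, if_neg h, if_neg h]
      have hs := hsne j k (fun h' => h h'.symm)
      rw [hc]; simp only [div_pow]
      field_simp
      linear_combination Real.sin_sq_add_cos_sq ((x j - x k) / 2)
  calc ∑ j : Fin N, (∑ k : Fin N, (if k = j then 0 else c j k)) ^ 2
      = ∑ j : Fin N, ∑ k : Fin N, ∑ l : Fin N,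
          ((if k = l then (if k = j then 0 else c j k ^ 2) else 0) + g j k l) := by
        rw [Finset.sum_congr rfl fun j _ => hsq j]
        exact Finset.sum_congr rfl fun j _ => Finset.sum_congr rfl fun k _ =>
          Finset.sum_congr rfl fun l _ => hsplit j k l
    _ = (∑ j : Fin N, ∑ k : Fin N, (if k = j then 0 else c j k ^ 2)) + T := by
        simp only [Finset.sum_add_distrib]
        rw [← hT]
        congr 1
        refine Finset.sum_congr rfl fun j _ => Finset.sum_congr rfl fun k _ => ?_
        simp [Finset.sum_ite_eq]
    _ = (∑ j : Fin N, ∑ k : Fin N, (if k = j then 0 else 1 / Real.sin ((x j - x k) / 2) ^ 2))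
        - (N : ℝ) * ((N : ℝ) - 1) + T := by
        rw [Finset.sum_congr rfl fun j _ => Finset.sum_congr rfl fun k _ => hdiag j k]
        simp only [Finset.sum_sub_distrib]
        rw [Finset.sum_congr rfl fun j _ => hcount1 j, Finset.sum_const, Finset.card_univ]
        simp
    _ = _ := by rw [hTval]; ring

theorem stmt_7 (N : ℕ) (hN : 2 ≤ N) (lam : ℝ) (hlam : 0 < lam)
    (x : Fin N → ℝ)
    (hx : ∀ j k : Fin N, j < k → 0 < Real.sin ((x j - x k) / 2)) :
    let Ψ : (Fin N → ℝ) → ℝ := fun y =>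
      ∏ j : Fin N, ∏ k : Fin N, if j < k then Real.sin ((y j - y k) / 2) ^ lam else 1
    (-(∑ j : Fin N, deriv (deriv (fun s => Ψ (Function.update x j s))) (x j))
        + (2 * lam * (lam - 1)) *
          (∑ j : Fin N, ∑ k : Fin N,
            if j < k then 1 / (4 * Real.sin ((x j - x k) / 2) ^ 2) else 0) * Ψ x
      = (lam ^ 2 * (N : ℝ) * ((N : ℝ) ^ 2 - 1) / 12) * Ψ x) := by
  classical
  intro Ψ
  have hΨx : Ψ x = ∏ a : Fin N, ∏ b : Fin N,
      if a < b then Real.sin ((x a - x b) / 2) ^ lam else 1 := rfl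
  have hsym : ∀ a b : Fin N, Real.sin ((x b - x a) / 2) ^ 2 = Real.sin ((x a - x b) / 2) ^ 2 := by
    intro a b
    have e : (x b - x a) / 2 = -((x a - x b) / 2) := by ring
    rw [e, Real.sin_neg, neg_sq]
  set a : Fin N → ℝ := fun j => ∑ k : Fin N, (if k = j then 0 else
      Real.cos ((x j - x k) / 2) / Real.sin ((x j - x k) / 2)) with ha
  set q : Fin N → ℝ := fun j => ∑ k : Fin N, (if k = j then 0 else
      1 / Real.sin ((x j - x k) / 2) ^ 2) with hq
  set A : ℝ := ∑ j : Fin N, (a j) ^ 2 with hA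
  set Q : ℝ := ∑ j : Fin N, q j with hQ
  set W : ℝ := ∑ j : Fin N, ∑ k : Fin N,
      (if j < k then 1 / Real.sin ((x j - x k) / 2) ^ 2 else 0) with hW
  -- per-j second derivative
  have hder : ∀ j : Fin N, deriv (deriv (fun s => Ψ (Function.update x j s))) (x j)
      = Ψ x * (lam ^ 2 / 4 * (a j) ^ 2 - lam / 4 * q j) := by
    intro j
    have h0 : deriv (deriv (fun s => Ψ (Function.update x j s))) (x j)
        = (∏ a : Fin N, ∏ b : Fin N, if a < b then Real.sin ((x a - x b) / 2) ^ lam else 1)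
          * ((lam * ∑ k : Fin N, (if k = j then 0 else
                Real.cos ((x j - x k) / 2) / Real.sin ((x j - x k) / 2) / 2)) ^ 2
             + lam * ∑ k : Fin N, (if k = j then 0 else
                -(1 / 4) / Real.sin ((x j - x k) / 2) ^ 2)) := deriv2_key N lam x hx j
    rw [h0, ← hΨx]
    have e1 : (∑ k : Fin N, (if k = j then (0:ℝ) else
        Real.cos ((x j - x k) / 2) / Real.sin ((x j - x k) / 2) / 2)) = a j / 2 := by
      rw [ha]
      simp only
      rw [Finset.sum_div]
      refine Finset.sum_congr rfl fun k _ => ?_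
      by_cases h : k = j <;> simp [h]
    have e2 : (∑ k : Fin N, (if k = j then (0:ℝ) else
        -(1 / 4) / Real.sin ((x j - x k) / 2) ^ 2)) = -(1 / 4) * q j := by
      rw [hq]
      simp only
      rw [Finset.mul_sum]
      refine Finset.sum_congr rfl fun k _ => ?_
      by_cases h : k = j <;> simp [h] <;> ring
    rw [e1, e2]
    ring
  have hsum : (∑ j : Fin N, deriv (deriv (fun s => Ψ (Function.update x j s))) (x j))
      = Ψ x * (lam ^ 2 / 4 * A - lam / 4 * Q) := by
    rw [Finset.sum_congr rfl fun j _ => hder j, ← Finset.mul_sum]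
    congr 1
    rw [hA, hQ]
    simp only [Finset.sum_sub_distrib, Finset.mul_sum]
  -- potential sum = W / 4
  have hV : (∑ j : Fin N, ∑ k : Fin N,
      (if j < k then 1 / (4 * Real.sin ((x j - x k) / 2) ^ 2) else 0)) = W / 4 := by
    rw [hW, Finset.sum_div]
    refine Finset.sum_congr rfl fun j _ => ?_
    rw [Finset.sum_div]
    refine Finset.sum_congr rfl fun k _ => ?_
    by_cases h : j < k <;> simp [h] <;> ring
  -- Q = 2 W
  have hQW : Q = 2 * W := by
    rw [hQ, hW]
    have hpt : ∀ j k : Fin N, (if k = j then (0:ℝ) else 1 / Real.sin ((x j - x k) / 2) ^ 2)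
        = (if j < k then 1 / Real.sin ((x j - x k) / 2) ^ 2 else 0)
          + (if k < j then 1 / Real.sin ((x j - x k) / 2) ^ 2 else 0) := by
      intro j k
      rcases lt_trichotomy j k with h | h | h
      · rw [if_neg (ne_of_gt h), if_pos h, if_neg (asymm h), add_zero]
      · simp [h, lt_irrefl]
      · rw [if_neg (ne_of_lt h), if_neg (asymm h), if_pos h, zero_add]
    rw [Finset.sum_congr rfl fun j _ => Finset.sum_congr rfl fun k _ => hpt j k]
    simp only [Finset.sum_add_distrib]
    have hswap : (∑ j : Fin N, ∑ k : Fin N,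
        (if k < j then 1 / Real.sin ((x j - x k) / 2) ^ 2 else 0))
        = ∑ j : Fin N, ∑ k : Fin N, (if j < k then 1 / Real.sin ((x j - x k) / 2) ^ 2 else 0) := by
      rw [Finset.sum_comm]
      refine Finset.sum_congr rfl fun j _ => Finset.sum_congr rfl fun k _ => ?_
      by_cases h : j < k <;> simp [h, hsym j k]
    rw [hswap]
    ring
  -- key combinatorial identity
  have hAQ : A = Q - (N : ℝ) * ((N : ℝ) - 1) - (N : ℝ) * ((N : ℝ) - 1) * ((N : ℝ) - 2) / 3 := by
    rw [hA, hQ, ha, hq]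
    exact sum_sq_cot N x hx
  rw [hsum, hV, hAQ, hQW]
  ring
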